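/- Let G be the group generated by two elements A, B subject to the relations A^3 = 1, B^2 = 1, and ABABAB = BABABA (the complex reflection group G_6). Then G has order 48. -/

import Mathlib

/-- The defining relations of the complex reflection group `G₆`:
`A³ = 1`, `B² = 1`, and `(AB)³ = (BA)³` (i.e. `ABABAB = BABABA`). -/
def G6rels : Set (FreeGroup (Fin 2)) :=
  {FreeGroup.of 0 ^ 3, FreeGroup.of 1 ^ 2,
    (FreeGroup.of 0 * FreeGroup.of 1) ^ 3 * ((FreeGroup.of 1 * FreeGroup.of 0) ^ 3)⁻¹}

/-- The complex reflection group `G₆` as a presented group. -/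
def G6 : Type := PresentedGroup G6rels

instance : Group G6 := by unfold G6; infer_instance

namespace G6P

def a : G6 := PresentedGroup.of (rels := G6rels) 0
def b : G6 := PresentedGroup.of (rels := G6rels) 1

lemma rel_one {r : FreeGroup (Fin 2)} (hr : r ∈ G6rels) :
    PresentedGroup.mk G6rels r = 1 :=
  (QuotientGroup.eq_one_iff r).2 (Subgroup.subset_normalClosure hr)

lemma ha : a ^ 3 = 1 := by
  have h := rel_one (show FreeGroup.of 0 ^ 3 ∈ G6rels from Or.inl rfl)
  simp only [a, PresentedGroup.of, map_pow] at h ⊢; exact h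

lemma hb : b ^ 2 = 1 := by
  have h := rel_one (show FreeGroup.of 1 ^ 2 ∈ G6rels from Or.inr (Or.inl rfl))
  simp only [b, PresentedGroup.of, map_pow] at h ⊢; exact h

lemma hr : (a * b) ^ 3 = (b * a) ^ 3 := by
  have h := rel_one (show (FreeGroup.of 0 * FreeGroup.of 1) ^ 3 *
      ((FreeGroup.of 1 * FreeGroup.of 0) ^ 3)⁻¹ ∈ G6rels from Or.inr (Or.inr rfl))
  have := (mul_inv_eq_one).1 (by simpa [a, b, PresentedGroup.of, map_pow, map_mul] using h)
  simp only [a, b, PresentedGroup.of] at this ⊢; exact this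

def z : G6 := (a * b) ^ 3
lemma zdef : z = (a * b) ^ 3 := rfl

lemma exp3 (x y : G6) : (x * y) ^ 3 = x * (y * (x * (y * (x * y)))) := by
  rw [pow_succ, pow_succ, pow_one]; simp only [mul_assoc]

lemma exp5 (x y : G6) : (x * y) ^ 5 = x * (y * (x * (y * (x * (y * (x * (y * (x * y)))))))) := by
  rw [pow_succ, pow_succ, pow_succ, pow_succ, pow_one]; simp only [mul_assoc]

lemma hA1 : a * (a * a) = 1 := by
  have := ha; rwa [pow_succ, pow_succ, pow_one, mul_assoc] at this
lemma hB1 : b * b = 1 := by have := hb; rwa [pow_succ, pow_one] at this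
lemma hA (x : G6) : a * (a * (a * x)) = x := by
  calc a * (a * (a * x)) = a * (a * a) * x := by simp only [mul_assoc]
  _ = x := by rw [hA1, one_mul]
lemma hB (x : G6) : b * (b * x) = x := by
  calc b * (b * x) = b * b * x := by simp only [mul_assoc]
  _ = x := by rw [hB1, one_mul]

lemma zexp : z = a * (b * (a * (b * (a * b)))) := by rw [zdef, exp3]

lemma hza : a * z = z * a := by
  conv_lhs => rw [zdef, hr]
  conv_rhs => rw [zdef]
  rw [exp3, exp3]; simp only [mul_assoc]

lemma hzb : b * z = z * b := by
  conv_lhs => rw [zdef, hr]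
  conv_rhs => rw [zdef]
  rw [exp3, exp3]; simp only [mul_assoc, hB, hB1, mul_one]

lemma hzaw (x : G6) : z * (a * x) = a * (z * x) := by
  rw [← mul_assoc, ← hza, mul_assoc]
lemma hzb1 : z * b = a * (b * (a * (b * a))) := by
  rw [zexp]; simp only [mul_assoc, hB, hB1, mul_one]

lemma L1 : z * (b * (a * a)) = a * (b * (a * b)) := by
  rw [zexp]; simp only [mul_assoc, hA, hB, hA1, hB1, mul_one, one_mul]

lemma M4 : z * (b * (a * (a * b))) = a * (b * a) := by
  rw [zexp]; simp only [mul_assoc, hA, hB, hA1, hB1, mul_one, one_mul]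

lemma z4 : z ^ 4 = 1 := by
  have key : (a * b) ^ 12 = 1 := by
    calc (a * b) ^ 12 = (a * b) ^ 3 * (a * b) ^ 9 := by rw [← pow_add]
    _ = (b * a) ^ 3 * (a * b) ^ 9 := by rw [hr]
    _ = (b * a) ^ 3 * ((a * b) * ((a * b) ^ 3 * (a * b) ^ 5)) := by
        rw [← pow_add, ← pow_succ']
    _ = (b * a) ^ 3 * ((a * b) * ((b * a) ^ 3 * (a * b) ^ 5)) := by rw [hr]
    _ = (b * (a * (b * (a * (a * (b * (a * (a * b)))))))) * ((a * b) ^ 3 * (a * b)) := by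
        rw [exp3, exp5, exp3 a b]
        simp only [mul_assoc, hA, hB, hA1, hB1, mul_one, one_mul]
    _ = (b * (a * (b * (a * (a * (b * (a * (a * b)))))))) * ((b * a) ^ 3 * (a * b)) := by
        rw [hr]
    _ = 1 := by
        rw [exp3]
        simp only [mul_assoc, hA, hB, hA1, hB1, mul_one, one_mul]
  rw [zdef, ← pow_mul]; exact key

lemma zcancel {X Y : G6} (h : z * X = Y) : X = z ^ 3 * Y := by
  rw [← h, ← mul_assoc, ← pow_succ, z4, one_mul]

lemma N1 : z * (a * (a * b)) = b * (a * (b * a)) := by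
  rw [hzaw, hzaw, hzb1, hA]
lemma M2 : z * (a * (a * (b * (a * a)))) = b * (a * b) := by
  rw [hzaw, hzaw, L1, hA]
lemma M6 : z * (a * (b * (a * (a * b)))) = a * (a * (b * a)) := by
  rw [hzaw, M4]
lemma N5 : z * (a * (b * (a * a))) = a * (a * (b * (a * b))) := by
  rw [hzaw, L1]

def w : Fin 12 → G6
  | 0 => 1 | 1 => a | 2 => b | 3 => a*a | 4 => a*b | 5 => b*a
  | 6 => a*a*b | 7 => a*b*a | 8 => b*a*a | 9 => b*a*b | 10 => a*a*b*a | 11 => a*b*a*a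

def ea : Fin 12 → ℕ := ![0,0,0,0,0,0,0,0,0,1,3,0]
def ta : Fin 12 → Fin 12 := ![1,3,5,0,7,8,10,11,2,6,9,4]
def eb : Fin 12 → ℕ := ![0,0,0,0,0,0,0,1,3,0,1,3]
def tb : Fin 12 → Fin 12 := ![2,4,0,6,1,9,3,8,7,5,11,10]

lemma hper (n : ℕ) : z ^ n = z ^ (n % 4) := by
  conv_lhs => rw [← Nat.div_add_mod n 4]
  rw [pow_add, pow_mul, z4, one_pow, one_mul]

lemma zpow_mod_eq {m n : ℕ} (h : m % 4 = n % 4) : z ^ m = z ^ n := by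
  rw [hper m, hper n, h]

lemma hwa : ∀ t : Fin 12, w t * a = z ^ (ea t) * w (ta t) := by
  intro t
  fin_cases t
  · show (1 : G6) * a = z ^ 0 * a; rw [one_mul, pow_zero, one_mul]
  · show a * a = z ^ 0 * (a * a); rw [pow_zero, one_mul]
  · show b * a = z ^ 0 * (b * a); rw [pow_zero, one_mul]
  · show a * a * a = z ^ 0 * 1
    rw [pow_zero, one_mul, mul_assoc]; exact hA1
  · show a * b * a = z ^ 0 * (a * b * a); rw [pow_zero, one_mul]
  · show b * a * a = z ^ 0 * (b * a * a); rw [pow_zero, one_mul]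
  · show a * a * b * a = z ^ 0 * (a * a * b * a); rw [pow_zero, one_mul]
  · show a * b * a * a = z ^ 0 * (a * b * a * a); rw [pow_zero, one_mul]
  · show b * a * a * a = z ^ 0 * b
    rw [pow_zero, one_mul, mul_assoc, mul_assoc, hA1, mul_one]
  · show b * a * b * a = z ^ 1 * (a * a * b)
    have h := N1.symm
    simp only [mul_assoc, pow_one]; exact h
  · show a * a * b * a * a = z ^ 3 * (b * a * b)
    have h := zcancel M2
    simp only [mul_assoc]; exact h
  · show a * b * a * a * a = z ^ 0 * (a * b)
    rw [pow_zero, one_mul, mul_assoc, mul_assoc, mul_assoc, hA1, mul_one]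

lemma hwb : ∀ t : Fin 12, w t * b = z ^ (eb t) * w (tb t) := by
  intro t
  fin_cases t
  · show (1 : G6) * b = z ^ 0 * b; rw [one_mul, pow_zero, one_mul]
  · show a * b = z ^ 0 * (a * b); rw [pow_zero, one_mul]
  · show b * b = z ^ 0 * 1; rw [pow_zero, one_mul]; exact hB1
  · show a * a * b = z ^ 0 * (a * a * b); rw [pow_zero, one_mul]
  · show a * b * b = z ^ 0 * a; rw [pow_zero, one_mul, mul_assoc, hB1, mul_one]
  · show b * a * b = z ^ 0 * (b * a * b); rw [pow_zero, one_mul]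
  · show a * a * b * b = z ^ 0 * (a * a)
    rw [pow_zero, one_mul, mul_assoc, mul_assoc, hB1, mul_one]
  · show a * b * a * b = z ^ 1 * (b * a * a)
    have h := L1.symm
    simp only [mul_assoc, pow_one]; exact h
  · show b * a * a * b = z ^ 3 * (a * b * a)
    have h := zcancel M4
    simp only [mul_assoc]; exact h
  · show b * a * b * b = z ^ 0 * (b * a)
    rw [pow_zero, one_mul, mul_assoc, mul_assoc, hB1, mul_one]
  · show a * a * b * a * b = z ^ 1 * (a * b * a * a)
    have h := N5.symm
    simp only [mul_assoc, pow_one]; exact h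
  · show a * b * a * a * b = z ^ 3 * (a * a * b * a)
    have h := zcancel M6
    simp only [mul_assoc]; exact h

def F : ZMod 4 × Fin 12 → G6 := fun p => z ^ p.1.val * w p.2

lemma hcomb (i : ZMod 4) (e : ℕ) (Y : G6) :
    z ^ i.val * (z ^ e * Y) = z ^ (i + (e : ZMod 4)).val * Y := by
  rw [← mul_assoc, ← pow_add]
  congr 1
  apply zpow_mod_eq
  have h1 : (i + (e : ZMod 4)).val = (i.val + (e : ZMod 4).val) % 4 := ZMod.val_add i _
  have h2 : ((e : ZMod 4)).val = e % 4 := ZMod.val_natCast 4 e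
  have h3 : (i + (e : ZMod 4)).val < 4 := ZMod.val_lt _
  omega

lemma hFa (p : ZMod 4 × Fin 12) : F p * a = F (p.1 + (ea p.2 : ZMod 4), ta p.2) := by
  obtain ⟨i, t⟩ := p
  show z ^ i.val * w t * a = z ^ ((i + (ea t : ZMod 4)).val) * w (ta t)
  rw [mul_assoc, hwa t, hcomb]

lemma hFb (p : ZMod 4 × Fin 12) : F p * b = F (p.1 + (eb p.2 : ZMod 4), tb p.2) := by
  obtain ⟨i, t⟩ := p
  show z ^ i.val * w t * b = z ^ ((i + (eb t : ZMod 4)).val) * w (tb t)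
  rw [mul_assoc, hwb t, hcomb]

lemma hainv : a⁻¹ = a * a := inv_eq_of_mul_eq_one_right hA1
lemma hbinv : b⁻¹ = b := inv_eq_of_mul_eq_one_right hB1

lemma hsurj : Function.Surjective F := by
  intro x
  have hx : x ∈ Subgroup.closure
      (Set.range (PresentedGroup.of : Fin 2 → PresentedGroup G6rels)) := by
    rw [PresentedGroup.closure_range_of]; trivial
  have hab : ∀ y ∈ Set.range (PresentedGroup.of : Fin 2 → PresentedGroup G6rels),
      y = a ∨ y = b := by
    rintro y ⟨j, rfl⟩
    fin_cases j
    · left; rfl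
    · right; rfl
  refine Subgroup.closure_induction_right (p := fun y _ => ∃ p, F p = y) ?_ ?_ ?_ hx
  · refine ⟨(0, 0), ?_⟩
    show z ^ (0 : ZMod 4).val * w 0 = 1
    rw [show ((0 : ZMod 4)).val = 0 from rfl, pow_zero, one_mul]
    rfl
  · rintro x _ y hy ⟨p, rfl⟩
    rcases hab y hy with rfl | rfl
    · exact ⟨_, (hFa p).symm⟩
    · exact ⟨_, (hFb p).symm⟩
  · rintro x _ y hy ⟨p, rfl⟩
    rcases hab y hy with rfl | rfl
    · refine ⟨(p.1 + (ea p.2 : ZMod 4) + (ea (ta p.2) : ZMod 4), ta (ta p.2)), ?_⟩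
      rw [hainv, ← mul_assoc, hFa, hFa]
    · refine ⟨(p.1 + (eb p.2 : ZMod 4), tb p.2), ?_⟩
      rw [hbinv, hFb]

/-! ### A faithful-on-the-image matrix model over `ZMod 13` -/

abbrev M13 := Matrix (Fin 2) (Fin 2) (ZMod 13)

def MA : M13ˣ := ⟨!![0,1;4,10], !![4,10;1,0], by decide, by decide⟩
def MB : M13ˣ := ⟨!![0,2;7,0], !![0,2;7,0], by decide, by decide⟩

def fA : Fin 2 → M13ˣ := ![MA, MB]

lemma hrel : ∀ r ∈ G6rels, FreeGroup.lift fA r = 1 := by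
  intro r hrm
  simp only [G6rels, Set.mem_insert_iff, Set.mem_singleton_iff] at hrm
  rcases hrm with rfl | rfl | rfl <;>
    · simp only [map_pow, map_mul, map_inv, FreeGroup.lift_apply_of]
      rw [Units.ext_iff]
      decide

def φ : G6 →* M13ˣ := PresentedGroup.toGroup hrel

lemma hφa : φ a = MA := PresentedGroup.toGroup.of hrel
lemma hφb : φ b = MB := PresentedGroup.toGroup.of hrel

def MZv : M13 := !![5,0;0,5]
def MWv : Fin 12 → M13 :=
  ![!![1,0;0,1], !![0,1;4,10], !![0,2;7,0], !![4,10;1,0], !![7,0;5,8], !![8,7;0,7],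
    !![5,8;0,2], !![0,7;6,7], !![2,0;2,5], !![10,3;10,0], !![6,7;8,7], !![2,5;2,11]]

lemma hφz : (φ z).1 = MZv := by
  rw [zdef, map_pow, map_mul, hφa, hφb]
  decide

lemma hφw : ∀ t : Fin 12, (φ (w t)).1 = MWv t := by
  intro t
  fin_cases t
  · show (φ 1).1 = _; rw [map_one]; decide
  · show (φ a).1 = _; rw [hφa]; decide
  · show (φ b).1 = _; rw [hφb]; decide
  · show (φ (a*a)).1 = _; rw [map_mul, hφa]; decide
  · show (φ (a*b)).1 = _; rw [map_mul, hφa, hφb]; decide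
  · show (φ (b*a)).1 = _; rw [map_mul, hφa, hφb]; decide
  · show (φ (a*a*b)).1 = _; rw [map_mul, map_mul, hφa, hφb]; decide
  · show (φ (a*b*a)).1 = _; rw [map_mul, map_mul, hφa, hφb]; decide
  · show (φ (b*a*a)).1 = _; rw [map_mul, map_mul, hφa, hφb]; decide
  · show (φ (b*a*b)).1 = _; rw [map_mul, map_mul, hφa, hφb]; decide
  · show (φ (a*a*b*a)).1 = _; rw [map_mul, map_mul, map_mul, hφa, hφb]; decide
  · show (φ (a*b*a*a)).1 = _; rw [map_mul, map_mul, map_mul, hφa, hφb]; decide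

lemma hφF (p : ZMod 4 × Fin 12) : (φ (F p)).1 = MZv ^ p.1.val * MWv p.2 := by
  obtain ⟨i, t⟩ := p
  show (φ (z ^ i.val * w t)).1 = _
  rw [map_mul, map_pow, Units.val_mul, Units.val_pow_eq_pow_val, hφz, hφw]

set_option maxRecDepth 8000 in
lemma hVinj : Function.Injective (fun p : ZMod 4 × Fin 12 => MZv ^ p.1.val * MWv p.2) := by
  decide

lemma hFinj : Function.Injective F := by
  intro p q h
  have h2 : (φ (F p)).1 = (φ (F q)).1 := by rw [h]
  rw [hφF, hφF] at h2
  exact hVinj h2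

end G6P

/-- `G₆` has order 48. -/
theorem G6_card : Nat.card G6 = 48 := by
  have h := Nat.card_eq_of_bijective G6P.F ⟨G6P.hFinj, G6P.hsurj⟩
  rw [← h, Nat.card_prod, Nat.card_zmod, Nat.card_eq_fintype_card, Fintype.card_fin]
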